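/- Fix a prime p. Suppose ∂, ∂* : ℚ_p → ℚ_p are nonzero ℚ-derivations such that neither is a constant multiple of the other, i.e., for every λ ∈ ℚ_p one has λ·∂ ≠ ∂* and λ·∂* ≠ ∂. Let E_∂ = {α ∈ ℤ_p : ∂α ∈ ℤ_p} and E_{∂*} = {α ∈ ℤ_p : ∂*α ∈ ℤ_p}. Then for every a ∈ ℚ_p^× one has a·E_{∂*} ⊄ E_∂ and a·E_∂ ⊄ E_{∂*}; consequently neither the E_∂-adic topology on ℚ_p refines the E_{∂*}-adic topology nor vice versa. -/

import Mathlib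

open Topology

/-- The collection `{aR + b : a ∈ K^×, b ∈ K}`, a basis for the `R`-adic topology. -/
def adicBasis {K : Type*} [Field K] (R : Subring K) : Set (Set K) :=
  {s | ∃ a b : K, a ≠ 0 ∧ s = {x | ∃ r ∈ R, x = a * r + b}}

/-- The `R`-adic topology on `K`: the topology with basis `{aR + b : a ∈ K^×, b ∈ K}`. -/
def adicTopology {K : Type*} [Field K] (R : Subring K) : TopologicalSpace K :=
  TopologicalSpace.generateFrom (adicBasis R)

/-- `E_∂ = {α ∈ ℤ_p : ∂α ∈ ℤ_p}`, as a subring of `ℚ_p` (membership in `ℤ_p` being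
expressed by the norm being at most `1`). -/
def Eder (p : ℕ) [Fact p.Prime] (d : Derivation ℚ ℚ_[p] ℚ_[p]) : Subring ℚ_[p] where
  carrier := {α : ℚ_[p] | ‖α‖ ≤ 1 ∧ ‖d α‖ ≤ 1}
  zero_mem' := by simp
  one_mem' := by simp
  add_mem' := by
    rintro a b ⟨ha1, ha2⟩ ⟨hb1, hb2⟩
    refine ⟨le_trans (Padic.nonarchimedean a b) (max_le ha1 hb1), ?_⟩
    rw [map_add]
    exact le_trans (Padic.nonarchimedean _ _) (max_le ha2 hb2)
  neg_mem' := by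
    rintro a ⟨h1, h2⟩
    refine ⟨by simpa using h1, ?_⟩
    rw [map_neg]
    simpa using h2
  mul_mem' := by
    rintro a b ⟨ha1, ha2⟩ ⟨hb1, hb2⟩
    refine ⟨?_, ?_⟩
    · rw [norm_mul]
      exact mul_le_one₀ ha1 (norm_nonneg _) hb1
    · rw [Derivation.leibniz, smul_eq_mul, smul_eq_mul]
      refine le_trans (Padic.nonarchimedean _ _) (max_le ?_ ?_)
      · rw [norm_mul]
        exact mul_le_one₀ ha1 (norm_nonneg _) hb2
      · rw [norm_mul]
        exact mul_le_one₀ hb1 (norm_nonneg _) ha2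


section Aux
variable {p : ℕ} [Fact p.Prime]

lemma der_rat_mul (d : Derivation ℚ ℚ_[p] ℚ_[p]) (q : ℚ) (x : ℚ_[p]) :
    d ((q : ℚ_[p]) * x) = (q : ℚ_[p]) * d x := by
  rw [← Rat.smul_def, Derivation.map_smul, Rat.smul_def]

lemma der_rat_cast (d : Derivation ℚ ℚ_[p] ℚ_[p]) (q : ℚ) :
    d ((q : ℚ_[p])) = 0 := by
  have : ((q : ℚ_[p])) = (q : ℚ_[p]) * 1 := (mul_one _).symm
  rw [this, der_rat_mul, Derivation.map_one_eq_zero, mul_zero]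

lemma key_lemma (d1 d2 : Derivation ℚ ℚ_[p] ℚ_[p]) (x y : ℚ_[p])
    (hxy : d1 x * d2 y ≠ d1 y * d2 x) (C : ℝ) :
    ∃ α : ℚ_[p], ‖α‖ ≤ 1 ∧ ‖d2 α‖ ≤ 1 ∧ C < ‖d1 α‖ := by
  have hp1 : (1:ℝ) < p := by exact_mod_cast (Fact.out : p.Prime).one_lt
  have hp0 : (0:ℝ) < p := lt_trans one_pos hp1
  set δ : ℚ_[p] := d1 x * d2 y - d1 y * d2 x with hδdef
  have hδ : δ ≠ 0 := sub_ne_zero.mpr hxy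
  obtain ⟨n, hn⟩ : ∃ n : ℕ, max C 1 < (p:ℝ) ^ n := pow_unbounded_of_one_lt _ hp1
  set t : ℚ_[p] := ((p : ℚ_[p]) ^ n)⁻¹ with htdef
  have hpn : ((p:ℚ_[p])^n) ≠ 0 := pow_ne_zero _ (by exact_mod_cast (Fact.out : p.Prime).ne_zero)
  have hnt : ‖t‖ = (p:ℝ)^n := by
    rw [htdef, norm_inv, norm_pow, Padic.norm_p, ← inv_pow, inv_inv]
  have hnt1 : 1 < ‖t‖ := by rw [hnt]; exact lt_of_le_of_lt (le_max_right C 1) hn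
  set r₀ : ℚ_[p] := t * d2 y / δ with hr₀
  set s₀ : ℚ_[p] := -(t * d2 x) / δ with hs₀
  have heq1 : r₀ * d1 x + s₀ * d1 y = t := by
    rw [hr₀, hs₀]; field_simp; ring
  have heq2 : r₀ * d2 x + s₀ * d2 y = 0 := by
    rw [hr₀, hs₀]; field_simp; ring
  set M : ℝ := max (max ‖d1 x‖ ‖d1 y‖) (max ‖d2 x‖ ‖d2 y‖) with hM
  have hM0 : 0 ≤ M := le_trans (norm_nonneg _) (le_trans (le_max_left _ _) (le_max_left _ _))
  have hε : (0:ℝ) < 1 / (M + 1) := by positivity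
  obtain ⟨r, hr⟩ := Padic.rat_dense p r₀ hε
  obtain ⟨s, hs⟩ := Padic.rat_dense p s₀ hε
  have bound : ∀ u v : ℚ_[p], ‖u‖ ≤ M → ‖v‖ ≤ M →
      ‖((r:ℚ_[p]) - r₀) * u + ((s:ℚ_[p]) - s₀) * v‖ ≤ 1 := by
    intro u v hu hv
    refine le_trans (Padic.nonarchimedean _ _) (max_le ?_ ?_) <;>
    · rw [norm_mul]
      calc _ ≤ (1 / (M+1)) * M := by
              apply mul_le_mul _ _ (norm_nonneg _) (le_of_lt hε)
              · rw [norm_sub_rev]; exact le_of_lt (by assumption)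
              · assumption
        _ ≤ 1 := by rw [div_mul_eq_mul_div, one_mul, div_le_one (by linarith)]; linarith
  set β : ℚ_[p] := (r:ℚ_[p]) * x + (s:ℚ_[p]) * y with hβ
  have hd1β : d1 β = (r:ℚ_[p]) * d1 x + (s:ℚ_[p]) * d1 y := by
    rw [hβ, map_add, der_rat_mul, der_rat_mul]
  have hd2β : d2 β = (r:ℚ_[p]) * d2 x + (s:ℚ_[p]) * d2 y := by
    rw [hβ, map_add, der_rat_mul, der_rat_mul]
  have hd1βt : ‖d1 β - t‖ ≤ 1 := by
    have : d1 β - t = ((r:ℚ_[p]) - r₀) * d1 x + ((s:ℚ_[p]) - s₀) * d1 y := by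
      rw [hd1β, ← heq1]; ring
    rw [this]
    exact bound _ _ (le_trans (le_max_left _ _) (le_max_left _ _))
      (le_trans (le_max_right _ _) (le_max_left _ _))
  have hd2β1 : ‖d2 β‖ ≤ 1 := by
    have : d2 β = ((r:ℚ_[p]) - r₀) * d2 x + ((s:ℚ_[p]) - s₀) * d2 y := by
      rw [hd2β, ← sub_zero (_ + _), ← heq2]; ring
    rw [this]
    exact bound _ _ (le_trans (le_max_left _ _) (le_max_right _ _))
      (le_trans (le_max_right _ _) (le_max_right _ _))
  obtain ⟨c, hc⟩ := Padic.rat_dense p β one_pos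
  refine ⟨β - (c:ℚ_[p]), le_of_lt hc, ?_, ?_⟩
  · rw [map_sub, der_rat_cast, sub_zero]; exact hd2β1
  · rw [map_sub, der_rat_cast, sub_zero]
    have h1 : ‖t‖ ≤ max ‖d1 β‖ ‖d1 β - t‖ := by
      calc ‖t‖ = ‖d1 β - (d1 β - t)‖ := by ring_nf
        _ ≤ _ := by
            rw [sub_eq_add_neg]
            exact le_trans (Padic.nonarchimedean _ _) (by rw [norm_neg])
    have : ‖t‖ ≤ ‖d1 β‖ := by
      rcases max_cases ‖d1 β‖ ‖d1 β - t‖ with ⟨h, _⟩ | ⟨h, _⟩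
      · rwa [h] at h1
      · rw [h] at h1; linarith
    calc C ≤ max C 1 := le_max_left _ _
      _ < (p:ℝ)^n := hn
      _ = ‖t‖ := hnt.symm
      _ ≤ ‖d1 β‖ := this

lemma not_subset_of_ne (d1 d2 : Derivation ℚ ℚ_[p] ℚ_[p]) (x y : ℚ_[p])
    (hxy : d1 x * d2 y ≠ d1 y * d2 x) (a : ℚ_[p]) (ha : a ≠ 0) :
    ¬ ((fun x => a * x) '' (Eder p d2 : Set ℚ_[p]) ⊆ (Eder p d1 : Set ℚ_[p])) := by
  intro hsub
  have ha0 : (0:ℝ) < ‖a‖ := norm_pos_iff.mpr ha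
  obtain ⟨α, hα1, hα2, hα3⟩ := key_lemma d1 d2 x y hxy (max 1 ‖d1 a‖ / ‖a‖)
  have hmem : a * α ∈ (Eder p d1 : Set ℚ_[p]) := hsub ⟨α, ⟨hα1, hα2⟩, rfl⟩
  obtain ⟨hm1, hm2⟩ := hmem
  have hlb : max 1 ‖d1 a‖ < ‖a * d1 α‖ := by
    rw [norm_mul]
    calc max 1 ‖d1 a‖ = ‖a‖ * (max 1 ‖d1 a‖ / ‖a‖) := by field_simp
      _ < ‖a‖ * ‖d1 α‖ := by exact (mul_lt_mul_iff_right₀ ha0).mpr hα3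
  have hub : ‖a * d1 α‖ ≤ max 1 ‖d1 a‖ := by
    have hrw : a * d1 α = d1 (a * α) - α * d1 a := by
      rw [Derivation.leibniz, smul_eq_mul, smul_eq_mul]; ring
    rw [hrw, sub_eq_add_neg]
    refine le_trans (Padic.nonarchimedean _ _) (max_le ?_ ?_)
    · exact le_trans hm2 (le_max_left _ _)
    · rw [norm_neg, norm_mul]
      exact le_trans (mul_le_of_le_one_left (norm_nonneg _) hα1) (le_max_right _ _)
  linarith

lemma pn_mem (d : Derivation ℚ ℚ_[p] ℚ_[p]) (z : ℚ_[p]) :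
    ∃ N : ℕ, ((p:ℚ_[p]))^N * z ∈ Eder p d := by
  have hp1 : (1:ℝ) < p := by exact_mod_cast (Fact.out : p.Prime).one_lt
  obtain ⟨N, hN⟩ : ∃ N : ℕ, max ‖z‖ ‖d z‖ < (p:ℝ)^N := pow_unbounded_of_one_lt _ hp1
  refine ⟨N, ?_, ?_⟩
  · rw [norm_mul, norm_pow, Padic.norm_p, inv_pow,
      inv_mul_le_iff₀ (by positivity), mul_one]
    exact le_of_lt (lt_of_le_of_lt (le_max_left _ _) hN)
  · have h1 : ((p:ℚ_[p]))^N = (((p:ℚ)^N : ℚ) : ℚ_[p]) := by push_cast; ring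
    rw [h1, der_rat_mul, ← h1, norm_mul, norm_pow, Padic.norm_p, inv_pow,
      inv_mul_le_iff₀ (by positivity), mul_one]
    exact le_of_lt (lt_of_le_of_lt (le_max_right _ _) hN)

lemma combine (d : Derivation ℚ ℚ_[p] ℚ_[p]) (c₁ c₂ : ℚ_[p]) (hc₁ : c₁ ≠ 0) (hc₂ : c₂ ≠ 0) :
    ∃ c : ℚ_[p], c ≠ 0 ∧ (∀ r ∈ Eder p d, ∃ r' ∈ Eder p d, c * r = c₁ * r') ∧
      (∀ r ∈ Eder p d, ∃ r' ∈ Eder p d, c * r = c₂ * r') := by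
  obtain ⟨N₁, hN₁⟩ := pn_mem d c₂
  obtain ⟨N₂, hN₂⟩ := pn_mem d c₁
  have hp : (p:ℚ_[p]) ≠ 0 := by exact_mod_cast (Fact.out : p.Prime).ne_zero
  have hpmem : ∀ N : ℕ, ((p:ℚ_[p]))^N ∈ Eder p d := by
    intro N
    refine ⟨?_, ?_⟩
    · rw [norm_pow, Padic.norm_p, inv_pow]
      exact inv_le_one_of_one_le₀ (one_le_pow₀ (by exact_mod_cast (Fact.out : p.Prime).one_le))
    · have h1 : ((p:ℚ_[p]))^N = (((p:ℚ)^N : ℚ) : ℚ_[p]) := by push_cast; ring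
      rw [h1, der_rat_cast, norm_zero]
      exact zero_le_one
  refine ⟨c₁ * c₂ * (p:ℚ_[p])^(N₁ + N₂),
    mul_ne_zero (mul_ne_zero hc₁ hc₂) (pow_ne_zero _ hp), ?_, ?_⟩
  · intro r hr
    refine ⟨(p:ℚ_[p])^N₁ * c₂ * ((p:ℚ_[p])^N₂ * r), ?_, by ring⟩
    exact mul_mem (mul_comm ((p:ℚ_[p])^N₁) c₂ ▸ hN₁) (mul_mem (hpmem N₂) hr)
  · intro r hr
    refine ⟨(p:ℚ_[p])^N₂ * c₁ * ((p:ℚ_[p])^N₁ * r), ?_, by ring⟩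
    exact mul_mem (mul_comm ((p:ℚ_[p])^N₂) c₁ ▸ hN₂) (mul_mem (hpmem N₁) hr)

lemma open_nbhd (d : Derivation ℚ ℚ_[p] ℚ_[p]) (s : Set ℚ_[p])
    (hs : IsOpen[adicTopology (Eder p d)] s) :
    ∀ x ∈ s, ∃ c : ℚ_[p], c ≠ 0 ∧ ∀ r ∈ Eder p d, c * r + x ∈ s := by
  induction hs with
  | basic u hu =>
    obtain ⟨a, b, ha, rfl⟩ := hu
    rintro x ⟨r₀, hr₀, rfl⟩
    refine ⟨a, ha, fun r hr => ⟨r + r₀, add_mem hr hr₀, by ring⟩⟩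
  | univ => exact fun x _ => ⟨1, one_ne_zero, fun r _ => trivial⟩
  | inter u v hu hv ihu ihv =>
    rintro x ⟨hxu, hxv⟩
    obtain ⟨c₁, hc₁, h₁⟩ := ihu x hxu
    obtain ⟨c₂, hc₂, h₂⟩ := ihv x hxv
    obtain ⟨c, hc, hs₁, hs₂⟩ := combine d c₁ c₂ hc₁ hc₂
    refine ⟨c, hc, fun r hr => ?_⟩
    obtain ⟨r₁, hr₁, e₁⟩ := hs₁ r hr
    obtain ⟨r₂, hr₂, e₂⟩ := hs₂ r hr
    exact ⟨e₁ ▸ h₁ r₁ hr₁, e₂ ▸ h₂ r₂ hr₂⟩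
  | sUnion S hS ih =>
    rintro x ⟨u, huS, hxu⟩
    obtain ⟨c, hc, h⟩ := ih u huS x hxu
    exact ⟨c, hc, fun r hr => ⟨u, huS, h r hr⟩⟩

lemma eder_basic_open (d : Derivation ℚ ℚ_[p] ℚ_[p]) :
    IsOpen[adicTopology (Eder p d)] (Eder p d : Set ℚ_[p]) := by
  have : (Eder p d : Set ℚ_[p]) = {x | ∃ r ∈ Eder p d, x = 1 * r + 0} := by
    ext z; simp
  rw [this]
  exact TopologicalSpace.GenerateOpen.basic _ ⟨1, 0, one_ne_zero, rfl⟩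

lemma witness_pair (d ds : Derivation ℚ ℚ_[p] ℚ_[p]) (hds : ds ≠ 0)
    (h2 : ∀ lam : ℚ_[p], (fun x => lam * ds x) ≠ ⇑d) :
    ∃ x y : ℚ_[p], d x * ds y ≠ d y * ds x := by
  obtain ⟨y, hy⟩ : ∃ y, ds y ≠ 0 := by
    by_contra h
    push_neg at h
    exact hds (by ext z; simpa using h z)
  by_contra h
  push_neg at h
  apply h2 (d y / ds y)
  funext x
  have hx := h x y
  field_simp
  linear_combination -hx

end Aux

/-- If `∂, ∂* : ℚ_p → ℚ_p` are nonzero `ℚ`-derivations, neither a constant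
multiple of the other, then for every `a ∈ ℚ_p^×` we have `a·E_{∂*} ⊄ E_∂` and
`a·E_∂ ⊄ E_{∂*}`; consequently neither of the `E_∂`-adic and `E_{∂*}`-adic topologies on
`ℚ_p` refines the other. -/
theorem statement6 (p : ℕ) [Fact p.Prime]
    (d ds : Derivation ℚ ℚ_[p] ℚ_[p]) (hd : d ≠ 0) (hds : ds ≠ 0)
    (h1 : ∀ lam : ℚ_[p], (fun x => lam * d x) ≠ ⇑ds)
    (h2 : ∀ lam : ℚ_[p], (fun x => lam * ds x) ≠ ⇑d) :
    (∀ a : ℚ_[p], a ≠ 0 →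
      ¬ ((fun x => a * x) '' (Eder p ds : Set ℚ_[p]) ⊆ (Eder p d : Set ℚ_[p])) ∧
      ¬ ((fun x => a * x) '' (Eder p d : Set ℚ_[p]) ⊆ (Eder p ds : Set ℚ_[p]))) ∧
    ¬ (∀ s : Set ℚ_[p],
        IsOpen[adicTopology (Eder p ds)] s → IsOpen[adicTopology (Eder p d)] s) ∧
    ¬ (∀ s : Set ℚ_[p],
        IsOpen[adicTopology (Eder p d)] s → IsOpen[adicTopology (Eder p ds)] s) := by
  obtain ⟨x, y, hxy⟩ := witness_pair d ds hds h2
  have hxy' : ds y * d x ≠ ds x * d y := by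
    intro h; apply hxy; linear_combination h
  have part1 : ∀ a : ℚ_[p], a ≠ 0 →
      ¬ ((fun x => a * x) '' (Eder p ds : Set ℚ_[p]) ⊆ (Eder p d : Set ℚ_[p])) ∧
      ¬ ((fun x => a * x) '' (Eder p d : Set ℚ_[p]) ⊆ (Eder p ds : Set ℚ_[p])) :=
    fun a ha => ⟨not_subset_of_ne d ds x y hxy a ha, not_subset_of_ne ds d y x hxy' a ha⟩
  refine ⟨part1, ?_, ?_⟩
  · intro H
    obtain ⟨c, hc, h⟩ := open_nbhd d _ (H _ (eder_basic_open ds)) 0 (Subring.zero_mem _)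
    refine (part1 c hc).2 ?_
    rintro _ ⟨r, hr, rfl⟩
    simpa using h r hr
  · intro H
    obtain ⟨c, hc, h⟩ := open_nbhd ds _ (H _ (eder_basic_open d)) 0 (Subring.zero_mem _)
    refine (part1 c hc).1 ?_
    rintro _ ⟨r, hr, rfl⟩
    simpa using h r hr
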